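/- For every integer k ≥ 1 and every n ∈ ℤ, the (k+2)×(k+2) determinant det( f(n+i−j, x, q^j·s)^k )_{i,j=0}^{k+1} is zero. -/

import Mathlib

open Finset

variable {K : Type*} [Field K]

noncomputable def qFibPos (q x t : K) : ℕ → K
  | 0 => 0
  | 1 => 1
  | n + 2 => x * qFibPos q x t (n + 1) + q ^ n * t * qFibPos q x t n

noncomputable def qFibNeg (q x t : K) : ℕ → K
  | 0 => 0
  | 1 => q / t
  | m + 2 => (qFibNeg q x t m - x * qFibNeg q x t (m + 1)) * q ^ (m + 2) / t

/-- The Carlitz q-Fibonacci polynomial `f(n, x, t)` for `n : ℤ`, defined by `f 0 = 0`,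
`f 1 = 1` and `f n = x * f (n-1) + q^(n-2) * t * f (n-2)`, solved backwards for `n < 0`. -/
noncomputable def qFib (q x t : K) : ℤ → K
  | Int.ofNat n => qFibPos q x t n
  | Int.negSucc m => qFibNeg q x t (m + 1)

lemma qFib_ofNat (q x t : K) (a : ℕ) : qFib q x t (a : ℤ) = qFibPos q x t a := rfl

lemma qFib_negNat (q x t : K) (a : ℕ) : qFib q x t (-(a : ℤ)) = qFibNeg q x t a := by
  cases a with
  | zero => rfl
  | succ b => rfl

lemma qFib_rec (q x t : K) (hq : q ≠ 0) (ht : t ≠ 0) (m : ℤ) :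
    qFib q x t (m + 2) = x * qFib q x t (m + 1) + q ^ m * t * qFib q x t m := by
  cases m with
  | ofNat a =>
      have h2 : ((a : ℤ) + 2) = ((a + 2 : ℕ) : ℤ) := by push_cast; ring
      have h1 : ((a : ℤ) + 1) = ((a + 1 : ℕ) : ℤ) := by push_cast; ring
      rw [Int.ofNat_eq_natCast, h2, h1, qFib_ofNat, qFib_ofNat, qFib_ofNat,
        zpow_natCast]
      rfl
  | negSucc a =>
      cases a with
      | zero =>
          show qFib q x t 1 = x * qFib q x t 0 + q ^ (-1 : ℤ) * t * qFib q x t (-1)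
          have : qFib q x t (-1) = q / t := rfl
          rw [this]
          show (1 : K) = x * 0 + q ^ (-1 : ℤ) * t * (q / t)
          field_simp
          simp
      | succ b =>
          have e2 : (Int.negSucc (b + 1) + 2) = -(b : ℤ) := by
            rw [Int.negSucc_eq]; push_cast; ring
          have e1 : (Int.negSucc (b + 1) + 1) = -((b + 1 : ℕ) : ℤ) := by
            rw [Int.negSucc_eq]; push_cast; ring
          have e0 : (Int.negSucc (b + 1)) = -((b + 2 : ℕ) : ℤ) := by
            rw [Int.negSucc_eq]; push_cast; ring
          rw [e2, e1, e0, qFib_negNat, qFib_negNat, qFib_negNat]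
          have hrec : qFibNeg q x t (b + 2)
              = (qFibNeg q x t b - x * qFibNeg q x t (b + 1)) * q ^ (b + 2) / t := rfl
          rw [hrec]
          have hz : q ^ (-((b + 2 : ℕ) : ℤ)) = (q ^ (b + 2) : K)⁻¹ := by
            rw [zpow_neg, zpow_natCast]
          rw [hz]
          field_simp
          ring

noncomputable def qFund (q x s : K) (n : ℤ) (a b : K) : ℕ → K
  | 0 => a
  | 1 => b
  | i + 2 => x * qFund q x s n a b (i + 1) + q ^ (n + i) * s * qFund q x s n a b i

lemma qFund_linear (q x s : K) (n : ℤ) (a b : K) (i : ℕ) :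
    qFund q x s n a b i = a * qFund q x s n 1 0 i + b * qFund q x s n 0 1 i := by
  induction i using Nat.twoStepInduction with
  | zero => simp [qFund]
  | one => simp [qFund]
  | more i ih1 ih2 =>
      show qFund q x s n a b (i + 2) = _
      rw [qFund, ih1, ih2]
      show _ = a * qFund q x s n 1 0 (i + 2) + b * qFund q x s n 0 1 (i + 2)
      rw [qFund, qFund]
      ring

lemma qFib_eq_qFund (q x s : K) (hq : q ≠ 0) (hs : s ≠ 0) (n : ℤ) (j : ℕ) (i : ℕ) :
    qFib q x (q ^ j * s) (n + i - j)
      = qFund q x s n (qFib q x (q ^ j * s) (n - j)) (qFib q x (q ^ j * s) (n + 1 - j)) i := by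
  have ht : q ^ j * s ≠ 0 := mul_ne_zero (pow_ne_zero _ hq) hs
  induction i using Nat.twoStepInduction with
  | zero => simp [qFund]
  | one => simp [qFund]
  | more i ih1 ih2 =>
      have harg : (n + (i + 2 : ℕ) - j) = (n + i - j) + 2 := by push_cast; ring
      rw [harg, qFib_rec q x _ hq ht]
      have h1 : (n + i - j + 1) = n + ((i + 1 : ℕ) : ℤ) - j := by push_cast; ring
      rw [h1, ih2, ih1]
      show _ = qFund q x s n _ _ (i + 2)
      rw [qFund]
      have hp : (q : K) ^ (n + (i : ℕ) - (j : ℕ)) * (q ^ j * s) = q ^ (n + i) * s := by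
        rw [← mul_assoc, ← zpow_natCast q j, ← zpow_add₀ hq]
        congr 2
        ring
      rw [hp]

theorem det_qFib_pow_eq_zero (q x s : K) (hq : q ≠ 0) (hs : s ≠ 0)
    (k : ℕ) (hk : 1 ≤ k) (n : ℤ) :
    Matrix.det (Matrix.of fun i j : Fin (k + 2) =>
      qFib q x (q ^ (j : ℕ) * s) (n + (i : ℕ) - (j : ℕ)) ^ k) = 0 := by
  classical
  set A : ℕ → K := qFund q x s n 1 0 with hA
  set B : ℕ → K := qFund q x s n 0 1 with hB
  set a : Fin (k + 2) → K := fun j => qFib q x (q ^ (j : ℕ) * s) (n - j) with ha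
  set b : Fin (k + 2) → K := fun j => qFib q x (q ^ (j : ℕ) * s) (n + 1 - j) with hb
  set M : Matrix (Fin (k + 2)) (Fin (k + 2)) K := Matrix.of fun i j : Fin (k + 2) =>
      qFib q x (q ^ (j : ℕ) * s) (n + (i : ℕ) - (j : ℕ)) ^ k with hM
  set P : Matrix (Fin (k + 2)) (Fin (k + 1)) K :=
      Matrix.of fun i m => A i ^ (m : ℕ) * B i ^ (k - (m : ℕ)) with hP
  set Q : Matrix (Fin (k + 1)) (Fin (k + 2)) K :=
      Matrix.of fun m j => a j ^ (m : ℕ) * b j ^ (k - (m : ℕ)) * (k.choose (m : ℕ)) with hQ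
  have hMPQ : M = P * Q := by
    ext i j
    rw [Matrix.mul_apply]
    have hentry : M i j = (a j * A (i : ℕ) + b j * B (i : ℕ)) ^ k := by
      have := qFib_eq_qFund q x s hq hs n (j : ℕ) (i : ℕ)
      rw [hM]
      simp only [Matrix.of_apply]
      rw [this, qFund_linear]
    rw [hentry, add_pow]
    rw [Finset.sum_range (fun m => (a j * A (i:ℕ)) ^ m * (b j * B (i:ℕ)) ^ (k - m) * (k.choose m : K))]
    apply Finset.sum_congr rfl
    intro m _
    simp only [hP, hQ, Matrix.of_apply]
    push_cast
    ring
  by_contra hdet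
  have hu : IsUnit M := (Matrix.isUnit_iff_isUnit_det M).2 (isUnit_iff_ne_zero.2 hdet)
  have hr1 : M.rank = k + 2 := by
    rw [Matrix.rank_of_isUnit M hu, Fintype.card_fin]
  have hr2 : M.rank ≤ k + 1 := by
    rw [hMPQ]
    exact (Matrix.rank_mul_le_left P Q).trans (P.rank_le_card_width.trans (by simp))
  omega
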